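/- arXiv:1806.05379 — 7 statements merged into one kernel-verified Lean document; each statement's English description precedes it below -/
import Mathlib

section
/- Let $\alpha > 1$, $m_\alpha > m_1^\alpha > 0$, and define $\eta_0 = 1 - (m_1^\alpha/m_\alpha)^{1/(\alpha-1)}$. Then $\eta_0 \in (0,1)$, and for every critical ratio $\eta \in [0, \eta_0)$, the quantity $q = 0$ minimizes over $q \geq 0$ the objective $(1-\eta)q + \sup_{F \in \mathcal{F}_{1,\alpha}} \mathbb{E}_F[\max(\tilde d - q, 0)]$. -/
open MeasureTheory Real

/-- Worst-case expected overage over probability distributions on `[0, ∞)`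
with mean `m1` and `α`-th moment `mα`. -/
noncomputable def worstOverage (α m1 mα q : ℝ) : ℝ :=
  sSup {E : ℝ | ∃ μ : Measure ℝ, IsProbabilityMeasure μ ∧ μ (Set.Iio 0) = 0 ∧
    Integrable (fun x => x) μ ∧ Integrable (fun x => x ^ α) μ ∧
    (∫ x, x ∂μ) = m1 ∧ (∫ x, x ^ α ∂μ) = mα ∧
    E = ∫ x, max (x - q) 0 ∂μ}

lemma integrable_dirac'' (f : ℝ → ℝ) (a : ℝ) : Integrable f (Measure.dirac a) := by
  have h : f =ᵐ[Measure.dirac a] fun _ => f a := by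
    rw [Filter.EventuallyEq, ae_dirac_eq]
    simp
  exact (integrable_const (f a)).congr h.symm

lemma integrable_twoPoint (c d b : ℝ) (f : ℝ → ℝ) :
    Integrable f (ENNReal.ofReal c • Measure.dirac b + ENNReal.ofReal d • Measure.dirac 0) :=
  integrable_add_measure.mpr
    ⟨(integrable_dirac'' f b).smul_measure ENNReal.ofReal_ne_top,
     (integrable_dirac'' f 0).smul_measure ENNReal.ofReal_ne_top⟩

lemma integral_twoPoint (c d b : ℝ) (hc : 0 ≤ c) (hd : 0 ≤ d) (f : ℝ → ℝ) :
    ∫ x, f x ∂(ENNReal.ofReal c • Measure.dirac b + ENNReal.ofReal d • Measure.dirac 0) =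
      c * f b + d * f 0 := by
  rw [integral_add_measure ((integrable_dirac'' f b).smul_measure ENNReal.ofReal_ne_top)
      ((integrable_dirac'' f 0).smul_measure ENNReal.ofReal_ne_top),
    integral_smul_measure, integral_smul_measure, integral_dirac, integral_dirac,
    ENNReal.toReal_ofReal hc, ENNReal.toReal_ofReal hd, smul_eq_mul, smul_eq_mul]

theorem zero_order_optimal_low_critical_ratio
    (α m1 mα : ℝ) (hα : 1 < α) (h0 : 0 < m1 ^ α) (h1 : m1 ^ α < mα) :
    let η0 : ℝ := 1 - (m1 ^ α / mα) ^ (1 / (α - 1))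
    0 < η0 ∧ η0 < 1 ∧
      ∀ η : ℝ, 0 ≤ η → η < η0 → ∀ q : ℝ, 0 ≤ q →
        (1 - η) * 0 + worstOverage α m1 mα 0 ≤ (1 - η) * q + worstOverage α m1 mα q := by
  intro η0
  have hα1 : 0 < α - 1 := by linarith
  have hmα : 0 < mα := lt_trans h0 h1
  have hr : 0 < m1 ^ α / mα := div_pos h0 hmα
  have hr1 : m1 ^ α / mα < 1 := (div_lt_one hmα).mpr h1
  set p : ℝ := (m1 ^ α / mα) ^ (1 / (α - 1)) with hp_def
  have hexp : 0 < 1 / (α - 1) := by positivity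
  have hp0 : 0 < p := Real.rpow_pos_of_pos hr _
  have hp1 : p < 1 := Real.rpow_lt_one hr.le hr1 hexp
  have hη0 : η0 = 1 - p := rfl
  refine ⟨by rw [hη0]; linarith, by rw [hη0]; linarith, ?_⟩
  intro η hη hηη0 q hq
  rw [hη0] at hηη0
  -- general facts about the feasible set
  set S : ℝ → Set ℝ := fun t => {E : ℝ | ∃ μ : Measure ℝ, IsProbabilityMeasure μ ∧
    μ (Set.Iio 0) = 0 ∧ Integrable (fun x => x) μ ∧ Integrable (fun x => x ^ α) μ ∧
    (∫ x, x ∂μ) = m1 ∧ (∫ x, x ^ α ∂μ) = mα ∧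
    E = ∫ x, max (x - t) 0 ∂μ} with hS_def
  have hWS : ∀ t : ℝ, worstOverage α m1 mα t = sSup (S t) := fun t => rfl
  by_cases hm1 : 0 < m1
  · -- the two-point distribution
    set b : ℝ := (mα / m1) ^ (1 / (α - 1)) with hb_def
    have hb0 : 0 < b := Real.rpow_pos_of_pos (div_pos hmα hm1) _
    have hpb : p * b = m1 := by
      rw [hp_def, hb_def, ← Real.mul_rpow hr.le (div_pos hmα hm1).le]
      have h2 : m1 ^ α / mα * (mα / m1) = m1 ^ (α - 1) := by
        rw [Real.rpow_sub hm1, Real.rpow_one]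
        field_simp
      rw [h2, ← Real.rpow_mul hm1.le, mul_one_div_cancel hα1.ne', Real.rpow_one]
    have hbα : b ^ α = mα / m1 * b := by
      have h3 : b ^ (α - 1) = mα / m1 := by
        rw [hb_def, ← Real.rpow_mul (div_pos hmα hm1).le]
        rw [one_div_mul_cancel hα1.ne', Real.rpow_one]
      calc b ^ α = b ^ (α - 1 + 1) := by ring_nf
        _ = b ^ (α - 1) * b ^ (1 : ℝ) := Real.rpow_add hb0 _ _
        _ = mα / m1 * b := by rw [h3, Real.rpow_one]
    have hpbα : p * b ^ α = mα := by
      rw [hbα]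
      calc p * (mα / m1 * b) = mα / m1 * (p * b) := by ring
        _ = mα / m1 * m1 := by rw [hpb]
        _ = mα := by field_simp
    set μ : Measure ℝ :=
      ENNReal.ofReal p • Measure.dirac b + ENNReal.ofReal (1 - p) • Measure.dirac 0 with hμ_def
    have hp1' : (0:ℝ) ≤ 1 - p := by linarith
    have hProb : IsProbabilityMeasure μ := by
      constructor
      rw [hμ_def]
      simp only [Measure.coe_add, Measure.coe_smul, Pi.add_apply, Pi.smul_apply,
        measure_univ, smul_eq_mul, mul_one]
      rw [← ENNReal.ofReal_add hp0.le hp1']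
      norm_num
    have hIio : μ (Set.Iio 0) = 0 := by
      rw [hμ_def]
      simp only [Measure.coe_add, Measure.coe_smul, Pi.add_apply, Pi.smul_apply, smul_eq_mul]
      rw [Measure.dirac_apply, Measure.dirac_apply]
      have hb : b ∉ Set.Iio 0 := by simp [not_lt.mpr hb0.le]
      have h00 : (0:ℝ) ∉ Set.Iio 0 := by simp
      rw [Set.indicator_of_notMem hb, Set.indicator_of_notMem h00]
      simp
    have hmem : ∀ t : ℝ, p * max (b - t) 0 + (1 - p) * max (0 - t) 0 ∈ S t := by
      intro t
      refine ⟨μ, hProb, hIio, integrable_twoPoint _ _ _ _, integrable_twoPoint _ _ _ _, ?_, ?_, ?_⟩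
      · rw [hμ_def, integral_twoPoint p (1 - p) b hp0.le hp1' (fun x => x)]
        rw [hpb]; ring
      · rw [hμ_def, integral_twoPoint p (1 - p) b hp0.le hp1' (fun x => x ^ α)]
        rw [hpbα, Real.zero_rpow (by linarith : α ≠ 0)]; ring
      · rw [hμ_def, integral_twoPoint p (1 - p) b hp0.le hp1' (fun x => max (x - t) 0)]
    -- upper bound for elements of S t
    have hub : ∀ t : ℝ, 0 ≤ t → ∀ E ∈ S t, E ≤ m1 := by
      intro t ht E hE
      obtain ⟨ν, hP, hν0, hix, _, him1, _, hE⟩ := hE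
      have hae : ∀ᵐ x ∂ν, 0 ≤ x := by
        have := measure_eq_zero_iff_ae_notMem.mp hν0
        filter_upwards [this] with x hx
        simpa [Set.mem_Iio, not_lt] using hx
      have hint : Integrable (fun x => max (x - t) 0) ν := by
        have := (hix.sub (integrable_const t)).sup (integrable_const (0:ℝ))
        exact this
      rw [hE, ← him1]
      refine integral_mono_ae hint hix ?_
      filter_upwards [hae] with x hx
      exact max_le (by linarith) hx
    have hbdd : ∀ t : ℝ, 0 ≤ t → BddAbove (S t) := fun t ht => ⟨m1, hub t ht⟩
    -- value at q = 0
    have hS0 : sSup (S 0) ≤ m1 := csSup_le ⟨_, hmem 0⟩ (hub 0 le_rfl)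
    -- lower bound at q
    have hSq : p * max (b - q) 0 + (1 - p) * max (0 - q) 0 ≤ sSup (S q) :=
      le_csSup (hbdd q hq) (hmem q)
    have hmax0 : max (0 - q) 0 = 0 := max_eq_right (by linarith)
    rw [hmax0, mul_zero, add_zero] at hSq
    have hkey : m1 ≤ (1 - η) * q + p * max (b - q) 0 := by
      rcases le_or_gt q b with hqb | hqb
      · rw [max_eq_left (by linarith)]
        nlinarith [mul_nonneg (by linarith : (0:ℝ) ≤ 1 - η - p) hq]
      · rw [max_eq_right (by linarith)]
        nlinarith [mul_lt_mul_of_pos_left hqb hp0]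
    rw [hWS, hWS]
    calc (1 - η) * 0 + sSup (S 0) ≤ m1 := by rw [mul_zero, zero_add]; exact hS0
      _ ≤ (1 - η) * q + p * max (b - q) 0 := hkey
      _ ≤ (1 - η) * q + sSup (S q) := by linarith
  · -- m1 ≤ 0 : the feasible set is empty
    have hm1' : m1 < 0 := by
      rcases lt_or_eq_of_le (not_lt.mp hm1) with h | h
      · exact h
      · exfalso; rw [h, Real.zero_rpow (by linarith : α ≠ 0)] at h0; exact lt_irrefl 0 h0
    have hempty : ∀ t : ℝ, S t = ∅ := by
      intro t
      rw [Set.eq_empty_iff_forall_notMem]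
      rintro E ⟨ν, hP, hν0, hix, _, him1, _, _⟩
      have hae : ∀ᵐ x ∂ν, 0 ≤ x := by
        have := measure_eq_zero_iff_ae_notMem.mp hν0
        filter_upwards [this] with x hx
        simpa [Set.mem_Iio, not_lt] using hx
      have : 0 ≤ ∫ x, x ∂ν := integral_nonneg_of_ae hae
      rw [him1] at this
      linarith
    rw [hWS, hWS, hempty, hempty, Real.sSup_empty]
    have : (0:ℝ) ≤ (1 - η) * q := mul_nonneg (by linarith) hq
    linarith
end

section
/- Let $\alpha > 1$ and $m_\alpha > 0$. For $q > \frac{\alpha-1}{\alpha} m_\alpha^{1/\alpha}$, the two-point random variable taking value $\frac{q\alpha}{\alpha-1}$ with probability $\frac{(\alpha-1)^\alpha m_\alpha}{\alpha^\alpha q^\alpha}$ and value $0$ otherwise is a valid probability distribution with $\alpha$th moment $m_\alpha$, and it satisfies $\mathbb{E}[\max(\tilde d - q, 0)] = \frac{m_\alpha}{\alpha}\left(\frac{\alpha-1}{\alpha q}\right)^{\alpha-1}$. -/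
open MeasureTheory Real

lemma my_integrable_dirac {f : ℝ → ℝ} (a : ℝ) : Integrable f (Measure.dirac a) :=
  (integrable_const (f a)).congr (ae_eq_dirac f).symm

lemma two_point_integral (f : ℝ → ℝ) (p s t : ℝ) (hs : 0 ≤ s) (ht : 0 ≤ t) :
    (∫ x, f x ∂(ENNReal.ofReal s • Measure.dirac p + ENNReal.ofReal t • Measure.dirac 0)) =
      s * f p + t * f 0 := by
  rw [integral_add_measure ((my_integrable_dirac p).smul_measure ENNReal.ofReal_ne_top)
    ((my_integrable_dirac 0).smul_measure ENNReal.ofReal_ne_top),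
    integral_smul_measure, integral_smul_measure, integral_dirac, integral_dirac,
    ENNReal.toReal_ofReal hs, ENNReal.toReal_ofReal ht, smul_eq_mul, smul_eq_mul]

theorem grundy_two_point_distribution
    (α mα q : ℝ) (hα : 1 < α) (hm : 0 < mα)
    (hq : (α - 1) / α * mα ^ (1 / α) < q) :
    let r : ℝ := (α - 1) ^ α * mα / (α ^ α * q ^ α)
    let μ : Measure ℝ :=
      ENNReal.ofReal r • Measure.dirac (q * α / (α - 1)) +
        ENNReal.ofReal (1 - r) • Measure.dirac 0
    0 ≤ r ∧ r < 1 ∧ IsProbabilityMeasure μ ∧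
      (∫ x, x ^ α ∂μ) = mα ∧
      (∫ x, max (x - q) 0 ∂μ) = mα / α * ((α - 1) / (α * q)) ^ (α - 1) := by
  intro r μ
  have hα0 : (0:ℝ) < α := by linarith
  have hα1 : (0:ℝ) < α - 1 := by linarith
  have hq0 : 0 < q := lt_trans (by positivity) hq
  have hαα : (0:ℝ) < α ^ α := rpow_pos_of_pos hα0 α
  have hqα : (0:ℝ) < q ^ α := rpow_pos_of_pos hq0 α
  have hα1α : (0:ℝ) < (α - 1) ^ α := rpow_pos_of_pos hα1 α
  have hrval : r = (α - 1) ^ α * mα / (α ^ α * q ^ α) := rfl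
  have hμval : μ = ENNReal.ofReal r • Measure.dirac (q * α / (α - 1)) +
      ENNReal.ofReal (1 - r) • Measure.dirac 0 := rfl
  have hr0 : 0 ≤ r := by rw [hrval]; positivity
  have h2 : ((α - 1) / α * mα ^ (1 / α)) ^ α = (α - 1) ^ α * mα / α ^ α := by
    rw [mul_rpow (by positivity) (by positivity), div_rpow hα1.le hα0.le,
      ← Real.rpow_mul hm.le, one_div, inv_mul_cancel₀ hα0.ne', rpow_one,
      div_mul_eq_mul_div]
  have h1 : (α - 1) ^ α * mα / α ^ α < q ^ α := by
    rw [← h2]; exact rpow_lt_rpow (by positivity) hq hα0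
  have hr1 : r < 1 := by
    rw [hrval, div_lt_one (by positivity)]
    rw [div_lt_iff₀ hαα] at h1
    linarith [h1]
  have hr1' : (0:ℝ) ≤ 1 - r := by linarith
  refine ⟨hr0, hr1, ?_, ?_, ?_⟩
  · constructor
    rw [hμval]
    simp only [Measure.coe_add, Pi.add_apply, Measure.smul_apply, smul_eq_mul,
      Measure.dirac_apply_of_mem (Set.mem_univ _), mul_one]
    rw [← ENNReal.ofReal_add hr0 hr1']
    norm_num
  · rw [hμval, two_point_integral (fun x => x ^ α) _ _ _ hr0 hr1']
    have h0 : (0:ℝ) ^ α = 0 := zero_rpow hα0.ne'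
    have hp : (q * α / (α - 1)) ^ α = q ^ α * α ^ α / (α - 1) ^ α := by
      rw [div_rpow (by positivity) hα1.le, mul_rpow hq0.le hα0.le]
    rw [h0, hp, hrval]
    field_simp
    ring
  · rw [hμval, two_point_integral (fun x => max (x - q) 0) _ _ _ hr0 hr1']
    have hpq : q * α / (α - 1) - q = q / (α - 1) := by field_simp; ring
    simp only [hpq, zero_sub]
    rw [max_eq_left (by positivity), max_eq_right (by linarith), mul_zero, add_zero]
    have e1 : q ^ α = q ^ (α - 1) * q := by
      rw [← Real.rpow_add_one hq0.ne', sub_add_cancel]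
    have e2 : α ^ α = α ^ (α - 1) * α := by
      rw [← Real.rpow_add_one hα0.ne', sub_add_cancel]
    have e3 : (α - 1) ^ α = (α - 1) ^ (α - 1) * (α - 1) := by
      rw [← Real.rpow_add_one hα1.ne', sub_add_cancel]
    have hq1 : (0:ℝ) < q ^ (α - 1) := rpow_pos_of_pos hq0 _
    have hα1' : (0:ℝ) < α ^ (α - 1) := rpow_pos_of_pos hα0 _
    have hα11 : (0:ℝ) < (α - 1) ^ (α - 1) := rpow_pos_of_pos hα1 _
    rw [div_rpow hα1.le (by positivity), mul_rpow hα0.le hq0.le, hrval, e1, e2, e3]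
    field_simp
end

section
/- Let $\alpha > 1$, $m_1 > 0$, $m_\alpha > m_1^\alpha$, and $q > \left(\frac{m_\alpha - m_1^\alpha}{m_1}\left(\frac{\alpha-1}{\alpha}\right)^{\alpha-1} + m_1^{\alpha-1}\right)^{1/(\alpha-1)}$. Then with $p = \left(m_1 - \frac{(m_\alpha-m_1^\alpha)(\alpha-1)^{\alpha-1}}{\alpha^{\alpha-1}q^{\alpha-1}}\right)^{\alpha/(\alpha-1)} m_1^{-\alpha/(\alpha-1)}$ and $r = \frac{(m_\alpha - m_1^\alpha)(\alpha-1)^\alpha}{\alpha^\alpha q^\alpha}$, we have $0 < p < 1$, $0 < r < 1$, and $p + r < 1$. -/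
open Real

theorem three_point_probability_validity
    (α m1 mα q : ℝ) (hα : 1 < α) (hm1 : 0 < m1) (h1 : m1 ^ α < mα)
    (hq : ((mα - m1 ^ α) / m1 * ((α - 1) / α) ^ (α - 1) + m1 ^ (α - 1)) ^ (1 / (α - 1)) < q) :
    let p : ℝ := (m1 - (mα - m1 ^ α) * (α - 1) ^ (α - 1) / (α ^ (α - 1) * q ^ (α - 1)))
        ^ (α / (α - 1)) * m1 ^ (-(α / (α - 1)))
    let r : ℝ := (mα - m1 ^ α) * (α - 1) ^ α / (α ^ α * q ^ α)
    0 < p ∧ p < 1 ∧ 0 < r ∧ r < 1 ∧ p + r < 1 := by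
  intro p r
  have hβ : (0:ℝ) < α - 1 := by linarith
  have hα0 : (0:ℝ) < α := by linarith
  have hD : (0:ℝ) < mα - m1 ^ α := by linarith
  have hγ : (1:ℝ) < α / (α - 1) := by rw [lt_div_iff₀ hβ]; linarith
  have hm1β : (0:ℝ) < m1 ^ (α - 1) := Real.rpow_pos_of_pos hm1 _
  have hbb : ((α - 1) / α) ^ (α - 1) = (α - 1) ^ (α - 1) / α ^ (α - 1) :=
    Real.div_rpow hβ.le hα0.le (α - 1)
  have htpos : (0:ℝ) < (mα - m1 ^ α) / m1 * ((α - 1) / α) ^ (α - 1) := by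
    have h := Real.rpow_pos_of_pos (show (0:ℝ) < (α - 1)/α by positivity) (α - 1)
    positivity
  have hS : (0:ℝ) < (mα - m1 ^ α) / m1 * ((α - 1) / α) ^ (α - 1) + m1 ^ (α - 1) := by linarith
  have hq0 : (0:ℝ) < q := lt_trans (Real.rpow_pos_of_pos hS _) hq
  have hqβ : (mα - m1 ^ α) / m1 * ((α - 1) / α) ^ (α - 1) + m1 ^ (α - 1) < q ^ (α - 1) := by
    have h := Real.rpow_lt_rpow (Real.rpow_pos_of_pos hS _).le hq hβ
    rw [← Real.rpow_mul hS.le, one_div, inv_mul_cancel₀ hβ.ne', Real.rpow_one] at h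
    exact h
  have hm1q : m1 < q := by
    by_contra hcon
    push_neg at hcon
    have : q ^ (α - 1) ≤ m1 ^ (α - 1) := Real.rpow_le_rpow hq0.le hcon hβ.le
    linarith
  have hqβpos : (0:ℝ) < q ^ (α - 1) := Real.rpow_pos_of_pos hq0 _
  have hββpos : (0:ℝ) < (α - 1) ^ (α - 1) := Real.rpow_pos_of_pos hβ _
  have hααpos : (0:ℝ) < α ^ (α - 1) := Real.rpow_pos_of_pos hα0 _
  -- key quantity A
  have hA_pos : (0:ℝ) < (mα - m1 ^ α) * (α - 1) ^ (α - 1) / (α ^ (α - 1) * q ^ (α - 1)) :=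
    div_pos (mul_pos hD hββpos) (mul_pos hααpos hqβpos)
  have ht_lt : (mα - m1 ^ α) / m1 * ((α - 1) / α) ^ (α - 1) < q ^ (α - 1) := by linarith
  have hA_lt : (mα - m1 ^ α) * (α - 1) ^ (α - 1) / (α ^ (α - 1) * q ^ (α - 1)) < m1 := by
    rw [hbb, div_mul_div_comm, div_lt_iff₀ (by positivity)] at ht_lt
    rw [div_lt_iff₀ (by positivity)]
    nlinarith
  set A : ℝ := (mα - m1 ^ α) * (α - 1) ^ (α - 1) / (α ^ (α - 1) * q ^ (α - 1)) with hAdef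
  have hbasepos : (0:ℝ) < (m1 - A) / m1 := div_pos (by linarith) hm1
  have hbaselt : (m1 - A) / m1 < 1 := by rw [div_lt_one hm1]; linarith
  have hp_eq : (m1 - A) ^ (α / (α - 1)) * m1 ^ (-(α / (α - 1)))
      = ((m1 - A) / m1) ^ (α / (α - 1)) := by
    rw [Real.rpow_neg hm1.le, Real.div_rpow (by linarith : (0:ℝ) ≤ m1 - A) hm1.le]
    ring
  have hp_lt : ((m1 - A) / m1) ^ (α / (α - 1)) < (m1 - A) / m1 := by
    calc ((m1 - A) / m1) ^ (α / (α - 1)) < ((m1 - A) / m1) ^ (1:ℝ) :=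
          Real.rpow_lt_rpow_of_exponent_gt hbasepos hbaselt hγ
      _ = (m1 - A) / m1 := Real.rpow_one _
  have hsub : ∀ x : ℝ, x ≠ 0 → x ^ α = x ^ (α - 1) * x := by
    intro x hx
    rw [show α = (α - 1) + 1 by ring, Real.rpow_add_one hx]
    ring_nf
  have hr_eq : (mα - m1 ^ α) * (α - 1) ^ α / (α ^ α * q ^ α) = A * (α - 1) / (α * q) := by
    rw [hsub (α - 1) hβ.ne', hsub α hα0.ne', hsub q hq0.ne', hAdef]
    field_simp
  have hr_lt_x : A * (α - 1) / (α * q) < A / m1 := by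
    rw [div_lt_div_iff₀ (by positivity) hm1]
    nlinarith [mul_lt_mul_of_pos_left (show (α - 1) * m1 < α * q by nlinarith) hA_pos]
  have hx_lt1 : A / m1 < 1 := by rw [div_lt_one hm1]; exact hA_lt
  have hx_pos : (0:ℝ) < A / m1 := div_pos hA_pos hm1
  have hp_pos : (0:ℝ) < (m1 - A) ^ (α / (α - 1)) * m1 ^ (-(α / (α - 1))) :=
    mul_pos (Real.rpow_pos_of_pos (by linarith) _) (Real.rpow_pos_of_pos hm1 _)
  have hsum : (m1 - A) / m1 + A / m1 = 1 := by field_simp; ring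
  have hr_pos : (0:ℝ) < (mα - m1 ^ α) * (α - 1) ^ α / (α ^ α * q ^ α) := by
    have h1 : (0:ℝ) < (α - 1) ^ α := Real.rpow_pos_of_pos hβ _
    have h2 : (0:ℝ) < α ^ α := Real.rpow_pos_of_pos hα0 _
    have h3 : (0:ℝ) < q ^ α := Real.rpow_pos_of_pos hq0 _
    positivity
  refine ⟨hp_pos, ?_, hr_pos, ?_, ?_⟩
  · show (m1 - A) ^ (α / (α - 1)) * m1 ^ (-(α / (α - 1))) < 1
    rw [hp_eq]
    linarith
  · show (mα - m1 ^ α) * (α - 1) ^ α / (α ^ α * q ^ α) < 1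
    rw [hr_eq]
    linarith
  · show (m1 - A) ^ (α / (α - 1)) * m1 ^ (-(α / (α - 1)))
      + (mα - m1 ^ α) * (α - 1) ^ α / (α ^ α * q ^ α) < 1
    rw [hp_eq, hr_eq]
    linarith
end

section
/- Let $\alpha > 2$, $m_1 > 0$, and set $C = m_1(\alpha-1)/\alpha$. Define $\triangle(q) = \left(\frac{q}{C}\right)^\alpha - \alpha\frac{q}{C} + 1 - \left(\left(\frac{q}{C}\right)^{\alpha-1} - \alpha + 1\right)^{\alpha/(\alpha-1)}$. Then $\triangle(\alpha^{1/(\alpha-1)}C) = 0$ and $\triangle(q) > 0$ for all $q > \alpha^{1/(\alpha-1)}C$. -/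
open Real Set

-- Bernoulli consequence: for v > α > 2, v^(α-2)(v-α+1) < (v-1)^(α-1)
private lemma key_v_ineq (α : ℝ) (hα : 2 < α) {v : ℝ} (hv : α < v) :
    v ^ (α - 2) * (v - α + 1) < (v - 1) ^ (α - 1) := by
  have hα1 : (1:ℝ) < α - 1 := by linarith
  have hv0 : (0:ℝ) < v := by linarith
  have hv1 : (1:ℝ) < v := by linarith
  have hB := one_add_mul_self_lt_rpow_one_add (s := -(1/v))
      (by rw [neg_le, neg_neg]; rw [div_le_one hv0]; linarith)
      (by simp; positivity) hα1
  -- hB : 1 + (α-1) * (-(1/v)) < (1 + -(1/v)) ^ (α-1)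
  have hvpow : (0:ℝ) < v ^ (α - 1) := Real.rpow_pos_of_pos hv0 _
  have h1 : (1 + -(1/v)) ^ (α-1) * v ^ (α-1) = (v - 1) ^ (α-1) := by
    rw [← Real.mul_rpow (by rw [← sub_eq_add_neg, sub_nonneg, div_le_one hv0]; linarith) hv0.le]
    congr 1
    field_simp
    ring
  have h2 : (1 + (α-1) * -(1/v)) * v ^ (α-1) = v ^ (α-2) * (v - α + 1) := by
    have : v ^ (α-1) = v ^ (α-2) * v := by
      rw [← Real.rpow_add_one hv0.ne' (α-2)]; congr 1; ring
    rw [this]; field_simp; ring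
  calc v ^ (α-2) * (v - α + 1) = (1 + (α-1) * -(1/v)) * v ^ (α-1) := h2.symm
    _ < (1 + -(1/v)) ^ (α-1) * v ^ (α-1) := by
        exact mul_lt_mul_of_pos_right hB hvpow
    _ = (v - 1) ^ (α-1) := h1

-- core: for u > α^(1/(α-1)), u^(α-2) * (u^(α-1)-α+1)^(1/(α-1)) < u^(α-1) - 1
private lemma core_ineq (α : ℝ) (hα : 2 < α) {u : ℝ} (hu : α ^ (1/(α-1)) < u) :
    u ^ (α-2) * (u ^ (α-1) - α + 1) ^ (1/(α-1)) < u ^ (α-1) - 1 := by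
  have hα0 : (0:ℝ) < α := by linarith
  have hα1 : (0:ℝ) < α - 1 := by linarith
  have hu0 : (0:ℝ) < α ^ (1/(α-1)) := Real.rpow_pos_of_pos hα0 _
  have hupos : (0:ℝ) < u := hu0.trans hu
  have hu0pow : (α ^ (1/(α-1))) ^ (α-1) = α := by
    rw [← Real.rpow_mul hα0.le]
    rw [one_div, inv_mul_cancel₀ hα1.ne', Real.rpow_one]
  have hv : α < u ^ (α-1) := by
    calc α = (α ^ (1/(α-1))) ^ (α-1) := hu0pow.symm
      _ < u ^ (α-1) := Real.rpow_lt_rpow hu0.le hu hα1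
  set v := u ^ (α-1) with hvdef
  have hs1 : (1:ℝ) < v - α + 1 := by linarith
  have hkey := key_v_ineq α hα hv
  by_contra hcon
  push_neg at hcon
  have h1 : (v - 1) ^ (α-1) ≤ (u ^ (α-2) * (v - α + 1) ^ (1/(α-1))) ^ (α-1) :=
    Real.rpow_le_rpow (by linarith) hcon hα1.le
  have h2 : (u ^ (α-2) * (v - α + 1) ^ (1/(α-1))) ^ (α-1)
      = v ^ (α-2) * (v - α + 1) := by
    rw [Real.mul_rpow (Real.rpow_nonneg hupos.le _) (Real.rpow_nonneg (by linarith) _)]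
    rw [← Real.rpow_mul hupos.le, ← Real.rpow_mul (by linarith : (0:ℝ) ≤ v - α + 1)]
    rw [one_div, inv_mul_cancel₀ hα1.ne', Real.rpow_one]
    rw [hvdef, ← Real.rpow_mul hupos.le]
    rw [mul_comm (α-2) (α-1), Real.rpow_mul hupos.le]
  rw [h2] at h1
  linarith

private lemma F_hasDeriv (α : ℝ) (hα : 2 < α) {u : ℝ} (hu : α ^ (1/(α-1)) ≤ u) :
    HasDerivAt (fun u : ℝ => u ^ α - α * u + 1 - (u ^ (α-1) - α + 1) ^ (α/(α-1)))
      (α * (u ^ (α-1) - 1 - u ^ (α-2) * (u ^ (α-1) - α + 1) ^ (1/(α-1)))) u := by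
  have hα0 : (0:ℝ) < α := by linarith
  have hα1 : (0:ℝ) < α - 1 := by linarith
  have hu0 : (0:ℝ) < α ^ (1/(α-1)) := Real.rpow_pos_of_pos hα0 _
  have hupos : (0:ℝ) < u := lt_of_lt_of_le hu0 hu
  have hu0pow : (α ^ (1/(α-1))) ^ (α-1) = α := by
    rw [← Real.rpow_mul hα0.le]
    rw [one_div, inv_mul_cancel₀ hα1.ne', Real.rpow_one]
  have hv : α ≤ u ^ (α-1) := by
    calc α = (α ^ (1/(α-1))) ^ (α-1) := hu0pow.symm
      _ ≤ u ^ (α-1) := Real.rpow_le_rpow hu0.le hu hα1.le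
  have hspos : (0:ℝ) < u ^ (α-1) - α + 1 := by linarith
  have h1 : HasDerivAt (fun u : ℝ => u ^ α) (α * u ^ (α-1)) u := by
    have := Real.hasDerivAt_rpow_const (p := α) (x := u) (Or.inl hupos.ne')
    simpa using this
  have h2 : HasDerivAt (fun u : ℝ => u ^ (α-1)) ((α-1) * u ^ (α-2)) u := by
    have := Real.hasDerivAt_rpow_const (p := α-1) (x := u) (Or.inl hupos.ne')
    have e : α - 1 - 1 = α - 2 := by ring
    rwa [e] at this
  have hs : HasDerivAt (fun u : ℝ => u ^ (α-1) - α + 1) ((α-1) * u ^ (α-2)) u :=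
    (h2.sub_const α).add_const 1
  have hcomp := hs.rpow_const (p := α/(α-1)) (Or.inl hspos.ne')
  have hlin : HasDerivAt (fun u : ℝ => α * u) α u := by
    simpa using (hasDerivAt_id u).const_mul α
  have hF := ((h1.sub hlin).add_const 1).sub hcomp
  convert hF using 1
  · rfl
  · rfl
  · rfl
  have e1 : α/(α-1) - 1 = 1/(α-1) := by field_simp; ring
  rw [e1]
  field_simp

private lemma F_strictMono (α : ℝ) (hα : 2 < α) :
    StrictMonoOn (fun u : ℝ => u ^ α - α * u + 1 - (u ^ (α-1) - α + 1) ^ (α/(α-1)))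
      (Set.Ici (α ^ (1/(α-1)))) := by
  have hα0 : (0:ℝ) < α := by linarith
  apply strictMonoOn_of_deriv_pos (convex_Ici _)
  · intro x hx
    exact (F_hasDeriv α hα hx).continuousAt.continuousWithinAt
  · intro x hx
    rw [interior_Ici] at hx
    rw [(F_hasDeriv α hα hx.le).deriv]
    have := core_ineq α hα hx
    nlinarith

theorem dual_gap_positive_alpha_gt_two
    (α m1 : ℝ) (hα : 2 < α) (hm1 : 0 < m1) :
    let C : ℝ := m1 * (α - 1) / α
    let Δ : ℝ → ℝ := fun q =>
      (q / C) ^ α - α * (q / C) + 1 - ((q / C) ^ (α - 1) - α + 1) ^ (α / (α - 1))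
    Δ (α ^ (1 / (α - 1)) * C) = 0 ∧ ∀ q : ℝ, α ^ (1 / (α - 1)) * C < q → 0 < Δ q := by
  intro C Δ
  have hα0 : (0:ℝ) < α := by linarith
  have hα1 : (0:ℝ) < α - 1 := by linarith
  have hC : 0 < C := by
    show 0 < m1 * (α - 1) / α
    positivity
  set u0 : ℝ := α ^ (1/(α-1)) with hu0def
  have hu0 : (0:ℝ) < u0 := Real.rpow_pos_of_pos hα0 _
  have hu0pow : u0 ^ (α-1) = α := by
    rw [hu0def, ← Real.rpow_mul hα0.le]
    rw [one_div, inv_mul_cancel₀ hα1.ne', Real.rpow_one]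
  have hu0C : u0 * C / C = u0 := by field_simp
  have hF0 : u0 ^ α - α * u0 + 1 - (u0 ^ (α-1) - α + 1) ^ (α/(α-1)) = 0 := by
    have h1 : u0 ^ α = α * u0 := by
      have h := Real.rpow_add_one hu0.ne' (α-1)
      rw [sub_add_cancel] at h
      rw [h, hu0pow]
    rw [h1, hu0pow]
    simp
  constructor
  · show (u0 * C / C) ^ α - α * (u0 * C / C) + 1
      - ((u0 * C / C) ^ (α-1) - α + 1) ^ (α/(α-1)) = 0
    rw [hu0C]; exact hF0
  · intro q hq
    have hu : u0 < q / C := by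
      rw [lt_div_iff₀ hC]; exact hq
    have := F_strictMono α hα (self_mem_Ici) (le_of_lt hu) hu
    show 0 < (q / C) ^ α - α * (q / C) + 1 - ((q / C) ^ (α-1) - α + 1) ^ (α/(α-1))
    beta_reduce at this
    linarith [hF0]
end

section
/- Let $\alpha > 2$ and $m_\alpha > m_1^\alpha > 0$. For all $q > m_1(\alpha-1)\alpha^{(2-\alpha)/(\alpha-1)}$, $\sup_{F \in \mathcal{F}_{1,\alpha}} \mathbb{E}_F[\max(\tilde d - q, 0)] \leq \frac{(m_\alpha - m_1^\alpha)(\alpha-1)^{\alpha-1}}{\alpha^\alpha q^{\alpha-1} - \alpha^2 m_1^{\alpha-1}(\alpha-1)^{\alpha-1}}$. -/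
open MeasureTheory Real

lemma tangent_rpow {a x p : ℝ} (ha : 0 < a) (hx : 0 ≤ x) (hp : 1 ≤ p) :
    p * a ^ (p - 1) * x ≤ x ^ p + (p - 1) * a ^ p := by
  have hs : -1 ≤ x / a - 1 := by
    have : 0 ≤ x / a := div_nonneg hx ha.le
    linarith
  have h := one_add_mul_self_le_rpow_one_add hs hp
  rw [add_sub_cancel, div_rpow hx ha.le] at h
  have hap : 0 < a ^ p := rpow_pos_of_pos ha p
  have h2 : (1 + p * (x / a - 1)) * a ^ p ≤ x ^ p := by
    rw [← le_div_iff₀ hap]; exact h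
  have h3 : a ^ (p - 1) * a = a ^ p := by
    rw [← rpow_add_one ha.ne', sub_add_cancel]
  have h4 : (1 + p * (x / a - 1)) * a ^ p = a ^ p + p * (a ^ (p-1)) * x - p * a ^ p := by
    rw [← h3]; field_simp; ring
  nlinarith [h2, h4]

lemma claimC {α m A : ℝ} (hα : 2 < α) (hm : 0 < m) (hA : α ^ (α - 1)⁻¹ * m ≤ A) :
    (A ^ (α-1) - (α-1) * m ^ (α-1)) ^ (α/(α-1)) + α * A * m ^ (α-1) ≤ A ^ α + m ^ α := by
  have hβ : (1:ℝ) < α - 1 := by linarith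
  have hβ0 : (0:ℝ) < α - 1 := by linarith
  have hαpos : (0:ℝ) < α := by linarith
  set β := α - 1 with hβdef
  set a0 := α ^ β⁻¹ * m with ha0def
  have hα1 : (1:ℝ) < α ^ β⁻¹ := by
    rw [Real.one_lt_rpow_iff_of_pos hαpos]
    exact Or.inl ⟨by linarith, by positivity⟩
  have ha0pos : 0 < a0 := by positivity
  have ha0β : a0 ^ β = α * m ^ β := by
    rw [ha0def, mul_rpow (by positivity) hm.le, rpow_inv_rpow hαpos.le hβ0.ne']
  set γ := α / β with hγdef
  have hγ1 : γ - 1 = β⁻¹ := by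
    have hne : α - 1 ≠ 0 := by linarith
    rw [hγdef, hβdef, div_sub_one hne, inv_eq_one_div]; congr 1; ring
  have hβγ : β * γ = α := by
    rw [hγdef]; field_simp
  have hmβpos : 0 < m ^ β := rpow_pos_of_pos hm β
  set g : ℝ → ℝ := fun A => A ^ α + m ^ α - α * m ^ β * A - (A ^ β - β * m ^ β) ^ γ
    with hgdef
  have hinner : ∀ B ∈ Set.Ici a0, m ^ β ≤ B ^ β - β * m ^ β := by
    intro B hB
    have hBβ : α * m ^ β ≤ B ^ β := by
      rw [← ha0β]; exact rpow_le_rpow ha0pos.le hB hβ0.le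
    have : β * m ^ β + m ^ β = α * m ^ β := by rw [hβdef]; ring
    linarith
  have hderiv : ∀ B ∈ Set.Ici a0, HasDerivAt g
      (α * B ^ β - α * m ^ β - α * ((B ^ β - β * m ^ β) ^ β⁻¹) * B ^ (β - 1)) B := by
    intro B hB
    have hBpos : 0 < B := lt_of_lt_of_le ha0pos hB
    have hinnerpos : 0 < B ^ β - β * m ^ β := lt_of_lt_of_le hmβpos (hinner B hB)
    have h1 : HasDerivAt (fun A : ℝ => A ^ α) (α * B ^ (α - 1)) B :=
      Real.hasDerivAt_rpow_const (Or.inl hBpos.ne')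
    have h2 : HasDerivAt (fun A : ℝ => A ^ β - β * m ^ β) (β * B ^ (β - 1)) B := by
      simpa using (Real.hasDerivAt_rpow_const (p := β) (Or.inl hBpos.ne')).sub_const (β * m ^ β)
    have h3 := h2.rpow_const (p := γ) (Or.inl hinnerpos.ne')
    have h4 : HasDerivAt (fun A : ℝ => α * m ^ β * A) (α * m ^ β) B := by
      simpa using (hasDerivAt_id B).const_mul (α * m ^ β)
    have h5 := ((h1.add_const (m ^ α)).sub h4).sub h3
    refine HasDerivAt.congr_deriv h5 ?_
    rw [hγ1, ← hβdef]
    rw [show α = β * γ from hβγ.symm]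
    ring
  have hderiv_nonneg : ∀ B ∈ interior (Set.Ici a0), 0 ≤ deriv g B := by
    intro B hB
    rw [interior_Ici] at hB
    have hBmem : B ∈ Set.Ici a0 := Set.mem_Ici.mpr (le_of_lt hB)
    have hBpos : 0 < B := lt_of_lt_of_le ha0pos (le_of_lt hB)
    have hinnerpos : 0 < B ^ β - β * m ^ β := lt_of_lt_of_le hmβpos (hinner B hBmem)
    rw [(hderiv B hBmem).deriv]
    set t := (B ^ β - β * m ^ β) ^ β⁻¹ with htdef
    have htβ : t ^ β = B ^ β - β * m ^ β := rpow_inv_rpow hinnerpos.le hβ0.ne'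
    have hBβ1pos : 0 < B ^ (β - 1) := rpow_pos_of_pos hBpos _
    set w := (B ^ β - m ^ β) / B ^ (β - 1) with hwdef
    have hBβmono : m ^ β < B ^ β := by
      have h := hinner B hBmem
      nlinarith [hmβpos, hβ0]
    have hwpos : 0 < w := div_pos (by linarith) hBβ1pos
    have hwB : w * B ^ (β - 1) = B ^ β - m ^ β := div_mul_cancel₀ _ hBβ1pos.ne'
    have htan := tangent_rpow hBpos hwpos.le hβ.le
    have heq : β * B ^ (β - 1) * w = β * B ^ β - β * m ^ β := by
      rw [mul_assoc, mul_comm (B ^ (β - 1)) w, hwB]; ring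
    have hwβ : t ^ β ≤ w ^ β := by
      rw [htβ]
      linarith [htan, heq]
    have htw : t ≤ w := by
      have := (Real.rpow_le_rpow_iff (by positivity) hwpos.le hβ0).mp hwβ
      exact this
    have : α * t * B ^ (β - 1) ≤ α * (B ^ β - m ^ β) := by
      calc α * t * B ^ (β - 1) ≤ α * w * B ^ (β - 1) := by
            apply mul_le_mul_of_nonneg_right _ hBβ1pos.le
            exact mul_le_mul_of_nonneg_left htw hαpos.le
        _ = α * (B ^ β - m ^ β) := by rw [mul_assoc, hwB]
    linarith
  have hmono : MonotoneOn g (Set.Ici a0) :=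
    monotoneOn_of_deriv_nonneg (convex_Ici a0)
      (fun B hB => (hderiv B hB).continuousAt.continuousWithinAt)
      (fun B hB => (hderiv B (interior_subset hB)).differentiableAt.differentiableWithinAt)
      hderiv_nonneg
  have hga0 : g a0 = 0 := by
    have h1 : a0 ^ β - β * m ^ β = m ^ β := by rw [ha0β, hβdef]; ring
    have h2 : (m ^ β) ^ γ = m ^ α := by rw [← Real.rpow_mul hm.le, hβγ]
    have h3 : a0 ^ α = α * m ^ β * a0 := by
      have : a0 ^ α = a0 ^ (β + 1) := by rw [hβdef]; norm_num
      rw [this, rpow_add_one ha0pos.ne', ha0β]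
    rw [hgdef]
    simp only [h1, h2, h3]
    ring
  have hfinal := hmono (Set.self_mem_Ici) hA hA
  rw [hga0] at hfinal
  have : 0 ≤ A ^ α + m ^ α - α * m ^ β * A - (A ^ β - β * m ^ β) ^ γ := hfinal
  linarith




lemma keyII {α m A x : ℝ} (hα : 2 < α) (hm : 0 < m) (hA : α ^ (α - 1)⁻¹ * m ≤ A)
    (hx : 0 ≤ x) :
    α * A ^ (α-1) * x + α * (α-1) * A * m ^ (α-1) ≤
      x ^ α + (α-1) * A ^ α + (α-1) * m ^ α + α * (α-1) * m ^ (α-1) * x := by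
  have hβ0 : (0:ℝ) < α - 1 := by linarith
  have hαpos : (0:ℝ) < α := by linarith
  have hmβ : 0 < m ^ (α-1) := rpow_pos_of_pos hm _
  have hα1 : (1:ℝ) < α ^ (α-1)⁻¹ := by
    rw [Real.one_lt_rpow_iff_of_pos hαpos]; exact Or.inl ⟨by linarith, by positivity⟩
  have ha0pos : 0 < α ^ (α-1)⁻¹ * m := by positivity
  have ha0β : (α ^ (α-1)⁻¹ * m) ^ (α-1) = α * m ^ (α-1) := by
    rw [mul_rpow (by positivity) hm.le, rpow_inv_rpow hαpos.le hβ0.ne']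
  have hy : α * m ^ (α-1) ≤ A ^ (α-1) := by
    rw [← ha0β]; exact rpow_le_rpow ha0pos.le hA hβ0.le
  have hypos : 0 < A ^ (α-1) - (α-1) * m ^ (α-1) := by nlinarith
  have htβ : ((A ^ (α-1) - (α-1) * m ^ (α-1)) ^ (α-1)⁻¹) ^ (α-1)
      = A ^ (α-1) - (α-1) * m ^ (α-1) := rpow_inv_rpow hypos.le hβ0.ne'
  have htpos : 0 < (A ^ (α-1) - (α-1) * m ^ (α-1)) ^ (α-1)⁻¹ := rpow_pos_of_pos hypos _
  have htα : ((A ^ (α-1) - (α-1) * m ^ (α-1)) ^ (α-1)⁻¹) ^ α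
      = (A ^ (α-1) - (α-1) * m ^ (α-1)) ^ (α/(α-1)) := by
    rw [← Real.rpow_mul hypos.le]; congr 1; field_simp
  have F1 := tangent_rpow htpos hx (le_of_lt (by linarith : (1:ℝ) < α))
  rw [htβ, htα] at F1
  have F2 := claimC hα hm hA
  have F3 := mul_le_mul_of_nonneg_left F2 hβ0.le
  nlinarith [F1, F3]

lemma Dpos {α m1 q : ℝ} (hα : 2 < α) (h0 : 0 < m1 ^ α)
    (hq : m1 * (α - 1) * α ^ ((2 - α) / (α - 1)) < q) :
    0 < α ^ α * q ^ (α - 1) - α ^ 2 * m1 ^ (α - 1) * (α - 1) ^ (α - 1) := by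
  have hβ0 : (0:ℝ) < α - 1 := by linarith
  have hαpos : (0:ℝ) < α := by linarith
  have hJβ : 0 < (α-1) ^ (α-1) := rpow_pos_of_pos hβ0 _
  have hα2 : α ^ α * α ^ (2 - α) = α ^ 2 := by
    rw [← Real.rpow_add hαpos, ← Real.rpow_natCast α 2]; norm_num
  have hαα : (0:ℝ) < α ^ α := rpow_pos_of_pos hαpos _
  rcases lt_trichotomy m1 0 with hm1|hm1|hm1
  · have hcos : 0 < Real.cos (α * π) := by
      have hd := Real.rpow_def_of_neg hm1 α
      rw [hd] at h0
      by_contra hc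
      push_neg at hc
      nlinarith [Real.exp_pos (Real.log m1 * α)]
    have hm1pos : (0:ℝ) < -m1 := by linarith
    have hP : 0 < (-m1) ^ (α-1) := rpow_pos_of_pos hm1pos _
    have hm1β : m1 ^ (α-1) = -((-m1) ^ (α-1) * Real.cos (α * π)) := by
      rw [Real.rpow_def_of_neg hm1, Real.rpow_def_of_pos hm1pos,
        Real.log_neg_eq_log, show (α - 1) * π = α * π - π by ring, Real.cos_sub_pi]
      ring
    rcases le_or_gt 0 q with hq0|hq0
    · have hqβ : 0 ≤ q ^ (α-1) := rpow_nonneg hq0 _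
      have h5 : 0 < α ^ 2 * ((-m1) ^ (α-1) * Real.cos (α * π)) * (α-1) ^ (α-1) := by
        positivity
      rw [hm1β]
      nlinarith [mul_nonneg hαα.le hqβ]
    · have hqneg : (0:ℝ) < -q := by linarith
      have hQ : 0 < (-q) ^ (α-1) := rpow_pos_of_pos hqneg _
      have hqβ' : q ^ (α-1) = -((-q) ^ (α-1) * Real.cos (α * π)) := by
        rw [Real.rpow_def_of_neg hq0, Real.rpow_def_of_pos hqneg,
          Real.log_neg_eq_log, show (α - 1) * π = α * π - π by ring, Real.cos_sub_pi]
        ring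
      have hlt : (-q) < (-m1) * (α-1) * α ^ ((2-α)/(α-1)) := by nlinarith
      have hexp : ((-m1) * (α-1) * α ^ ((2-α)/(α-1))) ^ (α-1)
          = (-m1) ^ (α-1) * (α-1) ^ (α-1) * α ^ (2-α) := by
        rw [mul_rpow (by positivity) (by positivity),
          mul_rpow (by positivity) (by positivity),
          ← Real.rpow_mul hαpos.le, div_mul_cancel₀ _ hβ0.ne']
      have hqβlt : (-q) ^ (α-1) < (-m1) ^ (α-1) * (α-1) ^ (α-1) * α ^ (2-α) := by
        rw [← hexp]; exact rpow_lt_rpow hqneg.le hlt hβ0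
      have h5 : α ^ α * (-q) ^ (α-1) < α ^ 2 * (-m1) ^ (α-1) * (α-1) ^ (α-1) := by
        have := mul_lt_mul_of_pos_left hqβlt hαα
        nlinarith [hα2, Real.rpow_pos_of_pos hαpos (2-α)]
      rw [hm1β, hqβ']
      nlinarith [mul_lt_mul_of_pos_right h5 hcos]
  · subst hm1
    rw [Real.zero_rpow (by linarith : α ≠ 0)] at h0
    linarith
  · have hqpos : 0 < q := lt_trans (by positivity) hq
    have hexp : (m1 * (α-1) * α ^ ((2-α)/(α-1))) ^ (α-1)
        = m1 ^ (α-1) * (α-1) ^ (α-1) * α ^ (2-α) := by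
      rw [mul_rpow (by positivity) (by positivity),
        mul_rpow (by positivity) (by positivity),
        ← Real.rpow_mul hαpos.le, div_mul_cancel₀ _ hβ0.ne']
    have h2 : m1 ^ (α-1) * (α-1) ^ (α-1) * α ^ (2-α) < q ^ (α-1) := by
      rw [← hexp]; exact rpow_lt_rpow (by positivity) hq hβ0
    have h5 := mul_lt_mul_of_pos_left h2 hαα
    have key : α ^ α * (m1 ^ (α-1) * (α-1) ^ (α-1) * α ^ (2-α))
        = α ^ 2 * m1 ^ (α-1) * (α-1) ^ (α-1) := by
      linear_combination (m1 ^ (α-1) * (α-1) ^ (α-1)) * hα2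
    linarith [h5, key]





/-- The set of achievable expected overages over the ambiguity set `𝓕_{1,α}`. -/
noncomputable def overageSet (α m1 mα q : ℝ) : Set ℝ :=
  {E : ℝ | ∃ μ : Measure ℝ, IsProbabilityMeasure μ ∧ μ (Set.Iio 0) = 0 ∧
    Integrable (fun x => x) μ ∧ Integrable (fun x => x ^ α) μ ∧
    (∫ x, x ∂μ) = m1 ∧ (∫ x, x ^ α ∂μ) = mα ∧
    E = ∫ x, max (x - q) 0 ∂μ}

theorem upper_bound_large_q_alpha_gt_two
    (α m1 mα : ℝ) (hα : 2 < α) (h0 : 0 < m1 ^ α) (h1 : m1 ^ α < mα) :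
    ∀ q : ℝ, m1 * (α - 1) * α ^ ((2 - α) / (α - 1)) < q →
      sSup (overageSet α m1 mα q)
        ≤ (mα - m1 ^ α) * (α - 1) ^ (α - 1)
            / (α ^ α * q ^ (α - 1) - α ^ 2 * m1 ^ (α - 1) * (α - 1) ^ (α - 1)) := by
  intro q hq
  have hβ0 : (0:ℝ) < α - 1 := by linarith
  have hαpos : (0:ℝ) < α := by linarith
  have hJβ : 0 < (α-1) ^ (α-1) := rpow_pos_of_pos hβ0 _
  have hD := Dpos hα h0 hq
  set D := α ^ α * q ^ (α - 1) - α ^ 2 * m1 ^ (α - 1) * (α - 1) ^ (α - 1) with hDdef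
  have hBnonneg : 0 ≤ (mα - m1 ^ α) * (α - 1) ^ (α - 1) / D :=
    div_nonneg (mul_nonneg (by linarith) hJβ.le) hD.le
  refine Real.sSup_le ?_ hBnonneg
  rintro E ⟨μ, hprob, hsupp, hint1, hintα, hm1int, hmαint, rfl⟩
  haveI := hprob
  have hae : ∀ᵐ x ∂μ, 0 ≤ x := by
    have hset : {x:ℝ | ¬ 0 ≤ x} = Set.Iio 0 := by ext x; simp [not_le]
    rw [ae_iff, hset]; exact hsupp
  have hm1nonneg : 0 ≤ m1 := by
    rw [← hm1int]; exact integral_nonneg_of_ae hae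
  have hm1pos : 0 < m1 := by
    rcases hm1nonneg.lt_or_eq with h|h
    · exact h
    · exfalso; rw [← h, Real.zero_rpow (by linarith : α ≠ 0)] at h0; linarith
  have hqpos : 0 < q := lt_trans (by positivity) hq
  set A := α * q / (α - 1) with hAdef
  have hApos : 0 < A := by rw [hAdef]; positivity
  have hAgt : α ^ (α-1)⁻¹ * m1 < A := by
    have h2 : α ^ (α-1)⁻¹ = α * α ^ ((2-α)/(α-1)) := by
      rw [show ((α:ℝ)-1)⁻¹ = 1 + (2-α)/(α-1) by field_simp; ring,
        Real.rpow_add hαpos, Real.rpow_one]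
    rw [h2, hAdef, lt_div_iff₀ hβ0]
    have := mul_lt_mul_of_pos_left hq hαpos
    nlinarith [this]
  have hAβgt : α * m1 ^ (α-1) < A ^ (α-1) := by
    have ha0β : (α ^ (α-1)⁻¹ * m1) ^ (α-1) = α * m1 ^ (α-1) := by
      rw [mul_rpow (by positivity) hm1pos.le, rpow_inv_rpow hαpos.le hβ0.ne']
    rw [← ha0β]
    exact rpow_lt_rpow (by positivity) hAgt hβ0
  set S := α * (A ^ (α-1) - α * m1 ^ (α-1)) with hSdef
  have hSpos : 0 < S := by rw [hSdef]; apply mul_pos hαpos; linarith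
  have hDS : D = (α-1) ^ (α-1) * S := by
    have hAβ : A ^ (α-1) = α ^ (α-1) * q ^ (α-1) / (α-1) ^ (α-1) := by
      rw [hAdef, div_rpow (by positivity) hβ0.le, mul_rpow hαpos.le hqpos.le]
    have hαα : α ^ α = α ^ (α-1) * α := by
      rw [← Real.rpow_add_one hαpos.ne', sub_add_cancel]
    rw [hDdef, hSdef, hAβ, hαα]
    field_simp
  set c := (α-1) ^ (α-1) / D with hcdef
  have hcpos : 0 < c := by rw [hcdef]; exact div_pos hJβ hD
  have hcS : c * S = 1 := by
    rw [hcdef, hDS]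
    field_simp
  have hpt : ∀ x : ℝ, 0 ≤ x →
      max (x - q) 0 ≤ c*(α-1)*m1^α + (-(c*α*m1^(α-1)))*x + c*x^α := by
    intro x hx
    have htan := tangent_rpow hm1pos hx (le_of_lt (by linarith : (1:ℝ) < α))
    apply max_le
    · have hII := keyII hα hm1pos hAgt.le hx
      have hAα : A ^ α = A ^ (α-1) * A := by
        rw [← Real.rpow_add_one hApos.ne', sub_add_cancel]
      have hq' : q = (α-1) * A / α := by
        rw [hAdef]; field_simp
      have hident : (x - q) * S = α * A^(α-1) * x - α^2 * m1^(α-1) * x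
          - (α-1)*A^α + α*(α-1)*A*m1^(α-1) := by
        rw [hSdef, hAα, hq']
        field_simp
        ring
      have hkey : (x - q) * S ≤ x ^ α - α * m1 ^ (α-1) * x + (α-1) * m1 ^ α := by
        rw [hident]; nlinarith [hII]
      calc x - q = (x - q) * S * c := by
            rw [mul_assoc, mul_comm S c, hcS, mul_one]
        _ ≤ (x ^ α - α * m1 ^ (α-1) * x + (α-1) * m1 ^ α) * c :=
            mul_le_mul_of_nonneg_right hkey hcpos.le
        _ = c*(α-1)*m1^α + (-(c*α*m1^(α-1)))*x + c*x^α := by ring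
    · have h2 : 0 ≤ x ^ α + (α-1)*m1^α - α*m1^(α-1)*x := by linarith
      have := mul_nonneg hcpos.le h2
      nlinarith [this]
  have hintf : Integrable (fun x => c*(α-1)*m1^α + (-(c*α*m1^(α-1)))*x + c*x^α) μ :=
    ((integrable_const _).add (hint1.const_mul _)).add (hintα.const_mul c)
  have hmax_int : Integrable (fun x => max (x - q) 0) μ :=
    (hint1.sub (integrable_const q)).pos_part
  have hle : ∫ x, max (x - q) 0 ∂μ ≤ ∫ x, (c*(α-1)*m1^α + (-(c*α*m1^(α-1)))*x + c*x^α) ∂μ :=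
    integral_mono_ae hmax_int hintf (hae.mono fun x hx => hpt x hx)
  have hf0 : Integrable (fun _ : ℝ => c*(α-1)*m1^α) μ := integrable_const _
  have hf1 : Integrable (fun x : ℝ => (-(c*α*m1^(α-1)))*x) μ := hint1.const_mul _
  have hf01 : Integrable (fun x : ℝ => c*(α-1)*m1^α + (-(c*α*m1^(α-1)))*x) μ := hf0.add hf1
  have hfα : Integrable (fun x : ℝ => c*x^α) μ := hintα.const_mul c
  have hint_eval : ∫ x, (c*(α-1)*m1^α + (-(c*α*m1^(α-1)))*x + c*x^α) ∂μ
      = c*(α-1)*m1^α + (-(c*α*m1^(α-1)))*m1 + c*mα := by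
    rw [integral_add hf01 hfα, integral_add hf0 hf1,
        integral_const, integral_const_mul, integral_const_mul, hm1int, hmαint]
    simp
  have hm1α : m1 ^ α = m1 ^ (α-1) * m1 := by
    rw [← Real.rpow_add_one hm1pos.ne', sub_add_cancel]
  calc ∫ x, max (x - q) 0 ∂μ
      ≤ c*(α-1)*m1^α + (-(c*α*m1^(α-1)))*m1 + c*mα := hle.trans_eq hint_eval
    _ = c * (mα - m1 ^ α) := by rw [hm1α]; ring
    _ = (mα - m1 ^ α) * (α-1)^(α-1) / D := by rw [hcdef]; ring
end

section
/- Let $\tilde d^*$ be a nonnegative random variable with distribution $F^*$ and survival function $\overline{F}^* = 1 - F^*$, and suppose there exist constants $C_1 > 0$, $C_2 > 0$, $\alpha > 1$, and $Q > 0$ such that for all $q > Q$: $C_1 q^{-(\alpha-1)} \leq \mathbb{E}[\max(\tilde d^* - q, 0)] \leq C_1 q^{-(\alpha-1)}(1 - C_2 q^{-(\alpha-1)})^{-1}$. Then there exists $C_3 > 0$ such that $\overline{F}^*(q) \geq C_3 q^{-\alpha}$ for all sufficiently large $q$, and consequently $\mathbb{E}[(\tilde d^*)^\alpha] = \infty$.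 -/
open MeasureTheory Real

theorem tail_lower_bound_and_infinite_alpha_moment
    (μ : Measure ℝ) (hprob : IsProbabilityMeasure μ) (hsupp : μ (Set.Iio 0) = 0)
    (C1 C2 α Q : ℝ) (hC1 : 0 < C1) (hC2 : 0 < C2) (hα : 1 < α) (hQ : 0 < Q)
    (hint : ∀ q : ℝ, Integrable (fun x => max (x - q) 0) μ)
    (hlb : ∀ q : ℝ, Q < q → C1 * q ^ (-(α - 1)) ≤ ∫ x, max (x - q) 0 ∂μ)
    (hub : ∀ q : ℝ, Q < q →
      (∫ x, max (x - q) 0 ∂μ) ≤ C1 * q ^ (-(α - 1)) * (1 - C2 * q ^ (-(α - 1)))⁻¹) :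
    (∃ C3 : ℝ, 0 < C3 ∧ ∃ Q' : ℝ, ∀ q : ℝ, Q' < q →
        C3 * q ^ (-α) ≤ (μ (Set.Ioi q)).toReal) ∧
      (∫⁻ x, ENNReal.ofReal (x ^ α) ∂μ) = ⊤ := by
  have hα1 : 0 < α - 1 := by linarith
  -- c = 2^{-(α-1)}
  set c : ℝ := (2 : ℝ) ^ (-(α - 1)) with hc_def
  have hc0 : 0 < c := rpow_pos_of_pos two_pos _
  have hc1 : c < 1 := rpow_lt_one_of_one_lt_of_neg one_lt_two (by linarith)
  -- ae nonnegativity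
  have hae : ∀ᵐ x ∂μ, 0 ≤ x := by
    refine ae_iff.mpr ?_
    have hset : {x : ℝ | ¬ 0 ≤ x} = Set.Iio 0 := by ext x; simp
    rw [hset]; exact hsupp
  -- Part 1 : tail lower bound
  have part1 : ∃ C3 : ℝ, 0 < C3 ∧ ∃ Q' : ℝ, ∀ q : ℝ, Q' < q →
      C3 * q ^ (-α) ≤ (μ (Set.Ioi q)).toReal := by
    refine ⟨C1 * (1 - c) / 2, by nlinarith, ?_⟩
    have hev : ∀ᶠ q : ℝ in Filter.atTop,
        Q < q ∧ q ^ (-(α - 1)) < (1 - c) / (2 * C2) := by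
      filter_upwards [Filter.eventually_gt_atTop Q,
        (tendsto_rpow_neg_atTop hα1).eventually_lt_const
          (div_pos (by linarith) (by linarith) : (0:ℝ) < (1 - c) / (2 * C2))] with q h1 h2
      exact ⟨h1, h2⟩
    obtain ⟨Q', hQ'⟩ := Filter.eventually_atTop.mp hev
    refine ⟨Q', fun q hq => ?_⟩
    obtain ⟨hqQ, hqe⟩ := hQ' q hq.le
    have hq0 : 0 < q := hQ.trans hqQ
    have ht : 0 < q ^ (-(α - 1)) := rpow_pos_of_pos hq0 _
    have hs_eq : (2 * q) ^ (-(α - 1)) = c * q ^ (-(α - 1)) :=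
      Real.mul_rpow (by norm_num) hq0.le
    have hs0 : 0 < (2 * q) ^ (-(α - 1)) := rpow_pos_of_pos (by linarith) _
    -- smallness of C2 * (2q)^{-(α-1)}
    have hsmall : C2 * (2 * q) ^ (-(α - 1)) ≤ (1 - c) / 2 := by
      have h1 : C2 * q ^ (-(α - 1)) < C2 * ((1 - c) / (2 * C2)) :=
        (mul_lt_mul_iff_right₀ hC2).mpr hqe
      have h2 : C2 * ((1 - c) / (2 * C2)) = (1 - c) / 2 := by
        field_simp
      have h3 : (2 * q) ^ (-(α - 1)) ≤ q ^ (-(α - 1)) := by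
        rw [hs_eq]
        nlinarith
      nlinarith
    -- difference of expectations ≤ q * tail
    have hdiff : (∫ x, max (x - q) 0 ∂μ) - (∫ x, max (x - 2 * q) 0 ∂μ)
        ≤ q * (μ (Set.Ioi q)).toReal := by
      rw [← integral_sub (hint q) (hint (2 * q))]
      have hindint : Integrable ((Set.Ioi q).indicator fun _ => q) μ :=
        (integrable_const q).indicator measurableSet_Ioi
      have hmono : ∀ x, max (x - q) 0 - max (x - 2 * q) 0
          ≤ (Set.Ioi q).indicator (fun _ => q) x := by
        intro x
        by_cases hx : x ∈ Set.Ioi q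
        · rw [Set.indicator_of_mem hx]
          simp only [Set.mem_Ioi] at hx
          have h1 : max (x - q) 0 = x - q := max_eq_left (by linarith)
          have h2 : x - 2 * q ≤ max (x - 2 * q) 0 := le_max_left _ _
          linarith
        · rw [Set.indicator_of_notMem hx]
          simp only [Set.mem_Ioi, not_lt] at hx
          have h1 : max (x - q) 0 = 0 := max_eq_right (by linarith)
          have h2 : (0:ℝ) ≤ max (x - 2 * q) 0 := le_max_right _ _
          linarith
      calc ∫ x, (max (x - q) 0 - max (x - 2 * q) 0) ∂μ
          ≤ ∫ x, (Set.Ioi q).indicator (fun _ => q) x ∂μ :=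
            integral_mono ((hint q).sub (hint (2 * q))) hindint hmono
        _ = (μ (Set.Ioi q)).toReal • q := integral_indicator_const _ measurableSet_Ioi
        _ = q * (μ (Set.Ioi q)).toReal := by rw [smul_eq_mul, mul_comm]
    -- lower bound on the difference
    have hlb1 := hlb q hqQ
    have hub2 := hub (2 * q) (by linarith)
    have hden : (1 + c) / 2 ≤ 1 - C2 * (2 * q) ^ (-(α - 1)) := by linarith
    have hdenpos : (0:ℝ) < (1 + c) / 2 := by linarith
    have hinv : (1 - C2 * (2 * q) ^ (-(α - 1)))⁻¹ ≤ ((1 + c) / 2)⁻¹ :=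
      inv_anti₀ hdenpos hden
    have hub3 : (∫ x, max (x - 2 * q) 0 ∂μ)
        ≤ C1 * (2 * q) ^ (-(α - 1)) * ((1 + c) / 2)⁻¹ := by
      refine hub2.trans ?_
      exact mul_le_mul_of_nonneg_left hinv (by positivity)
    have hkey : C1 * (2 * q) ^ (-(α - 1)) * ((1 + c) / 2)⁻¹
        ≤ C1 * q ^ (-(α - 1)) * ((1 + c) / 2) := by
      rw [hs_eq]
      have h1c : (0:ℝ) < 1 + c := by linarith
      have hcineq : c * ((1 + c) / 2)⁻¹ ≤ (1 + c) / 2 := by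
        rw [inv_div]
        rw [mul_div_assoc']
        rw [div_le_div_iff₀ h1c two_pos]
        nlinarith [sq_nonneg (1 - c)]
      calc C1 * (c * q ^ (-(α - 1))) * ((1 + c) / 2)⁻¹
          = (C1 * q ^ (-(α - 1))) * (c * ((1 + c) / 2)⁻¹) := by ring
        _ ≤ (C1 * q ^ (-(α - 1))) * ((1 + c) / 2) := by
            exact mul_le_mul_of_nonneg_left hcineq (by positivity)
        _ = C1 * q ^ (-(α - 1)) * ((1 + c) / 2) := by ring
    have hfinal : (C1 * (1 - c) / 2) * q ^ (-(α - 1)) ≤ q * (μ (Set.Ioi q)).toReal := by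
      have hE2 : (∫ x, max (x - 2 * q) 0 ∂μ) ≤ C1 * q ^ (-(α - 1)) * ((1 + c) / 2) :=
        hub3.trans hkey
      nlinarith
    -- convert exponent
    have hpow : q ^ (-(α - 1)) = q ^ (-α) * q := by
      have h1 : -(α - 1) = -α + 1 := by ring
      rw [h1, Real.rpow_add hq0, Real.rpow_one]
    rw [hpow] at hfinal
    have := le_of_mul_le_mul_right (by linarith [hfinal] :
      (C1 * (1 - c) / 2) * q ^ (-α) * q ≤ (μ (Set.Ioi q)).toReal * q) hq0
    exact this
  refine ⟨part1, ?_⟩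
  -- Part 2 : infinite α-moment
  have hB : ∀ q : ℝ, Q < q →
      ENNReal.ofReal C1 ≤ ∫⁻ x in Set.Ioi q, ENNReal.ofReal (x ^ α) ∂μ := by
    intro q hq
    have hq0 : 0 < q := hQ.trans hq
    have ht : 0 < q ^ (-(α - 1)) := rpow_pos_of_pos hq0 _
    have h1 : ENNReal.ofReal (C1 * q ^ (-(α - 1)))
        ≤ ∫⁻ x, ENNReal.ofReal (max (x - q) 0) ∂μ := by
      rw [← ofReal_integral_eq_lintegral_ofReal (hint q)
        (Filter.Eventually.of_forall fun x => le_max_right _ _)]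
      exact ENNReal.ofReal_le_ofReal (hlb q hq)
    have h2 : (∫⁻ x, ENNReal.ofReal (max (x - q) 0) ∂μ)
        ≤ ENNReal.ofReal (q ^ (-(α - 1))) *
          ∫⁻ x in Set.Ioi q, ENNReal.ofReal (x ^ α) ∂μ := by
      have hptwise : ∀ᵐ x ∂μ, ENNReal.ofReal (max (x - q) 0)
          ≤ (Set.Ioi q).indicator
            (fun x => ENNReal.ofReal (q ^ (-(α - 1))) * ENNReal.ofReal (x ^ α)) x := by
        filter_upwards [hae] with x hx
        by_cases hxq : x ∈ Set.Ioi q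
        · rw [Set.indicator_of_mem hxq]
          simp only [Set.mem_Ioi] at hxq
          have hx0 : 0 < x := hq0.trans hxq
          rw [← ENNReal.ofReal_mul (rpow_nonneg hq0.le _)]
          apply ENNReal.ofReal_le_ofReal
          have hxe : x ^ (-(α - 1)) ≤ q ^ (-(α - 1)) :=
            rpow_le_rpow_of_nonpos hq0 hxq.le (by linarith)
          have hsplit : x ^ α * x ^ (-(α - 1)) = x := by
            rw [← Real.rpow_add hx0]
            norm_num
          have hxle : x ≤ q ^ (-(α - 1)) * x ^ α := by
            calc x = x ^ α * x ^ (-(α - 1)) := hsplit.symm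
              _ ≤ x ^ α * q ^ (-(α - 1)) :=
                mul_le_mul_of_nonneg_left hxe (rpow_nonneg hx0.le _)
              _ = q ^ (-(α - 1)) * x ^ α := mul_comm _ _
          have : max (x - q) 0 ≤ x := max_le (by linarith) hx
          linarith
        · rw [Set.indicator_of_notMem hxq]
          simp only [Set.mem_Ioi, not_lt] at hxq
          have : max (x - q) 0 = 0 := max_eq_right (by linarith)
          simp [this]
      calc (∫⁻ x, ENNReal.ofReal (max (x - q) 0) ∂μ)
          ≤ ∫⁻ x, (Set.Ioi q).indicator
              (fun x => ENNReal.ofReal (q ^ (-(α - 1))) * ENNReal.ofReal (x ^ α)) x ∂μ :=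
            lintegral_mono_ae hptwise
        _ = ∫⁻ x in Set.Ioi q,
              ENNReal.ofReal (q ^ (-(α - 1))) * ENNReal.ofReal (x ^ α) ∂μ := by
            rw [lintegral_indicator measurableSet_Ioi]
        _ = ENNReal.ofReal (q ^ (-(α - 1))) *
              ∫⁻ x in Set.Ioi q, ENNReal.ofReal (x ^ α) ∂μ :=
            lintegral_const_mul' _ _ ENNReal.ofReal_ne_top
    have h3 : ENNReal.ofReal (q ^ (-(α - 1))) * ENNReal.ofReal C1
        ≤ ENNReal.ofReal (q ^ (-(α - 1))) *
          ∫⁻ x in Set.Ioi q, ENNReal.ofReal (x ^ α) ∂μ := by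
      calc ENNReal.ofReal (q ^ (-(α - 1))) * ENNReal.ofReal C1
          = ENNReal.ofReal (C1 * q ^ (-(α - 1))) := by
            rw [← ENNReal.ofReal_mul (rpow_nonneg hq0.le _), mul_comm]
        _ ≤ _ := h1.trans h2
    exact (ENNReal.mul_le_mul_iff_right (ENNReal.ofReal_pos.mpr ht).ne'
      ENNReal.ofReal_ne_top).mp h3
  by_contra hfin
  set ν := μ.withDensity (fun x => ENNReal.ofReal (x ^ α)) with hν_def
  have hνset : ∀ s : Set ℝ, MeasurableSet s →
      ν s = ∫⁻ x in s, ENNReal.ofReal (x ^ α) ∂μ := fun s hs => withDensity_apply _ hs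
  have hνfin : ν (Set.Ioi (Q + 1 + (0:ℕ))) ≠ ⊤ := by
    rw [hνset _ measurableSet_Ioi]
    exact fun h => hfin (top_le_iff.mp (h ▸ setLIntegral_le_lintegral _ _))
  have hanti : Antitone (fun n : ℕ => Set.Ioi (Q + 1 + (n:ℝ))) := by
    intro n m hnm
    exact Set.Ioi_subset_Ioi (add_le_add_right (Nat.cast_le.mpr hnm) _)
  have htend := tendsto_measure_iInter_atTop (μ := ν)
    (fun n => measurableSet_Ioi.nullMeasurableSet) hanti ⟨0, hνfin⟩
  have hinter : ⋂ n : ℕ, Set.Ioi (Q + 1 + (n:ℝ)) = ∅ := by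
    ext x
    simp only [Set.mem_iInter, Set.mem_Ioi, Set.mem_empty_iff_false, iff_false, not_forall,
      not_lt]
    obtain ⟨n, hn⟩ := exists_nat_ge x
    exact ⟨n, by linarith⟩
  rw [hinter, measure_empty] at htend
  have hlow : ∀ n : ℕ, ENNReal.ofReal C1 ≤ ν (Set.Ioi (Q + 1 + (n:ℝ))) := by
    intro n
    rw [hνset _ measurableSet_Ioi]
    have hn0 : (0:ℝ) ≤ n := Nat.cast_nonneg n
    exact hB _ (by linarith)
  have hle : ENNReal.ofReal C1 ≤ 0 := ge_of_tendsto' htend hlow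
  exact absurd hle (by simp [ENNReal.ofReal_pos.mpr hC1, (ENNReal.ofReal_pos.mpr hC1).ne'])
end

section
/- Let $\tilde d^*$ be a nonnegative random variable whose survival function $\overline{F}^*$ is regularly varying at infinity with index $-\alpha$ for some $\alpha > 1$, and for $\eta \in (0,1)$ let $q^*_\eta$ satisfy $\mathbb{P}(\tilde d^* > q^*_\eta) = 1 - \eta$ and let $C^*_\eta = (1-\eta)q^*_\eta + \mathbb{E}[\max(\tilde d^* - q^*_\eta, 0)]$. Then $\lim_{\eta \uparrow 1} \frac{C^*_\eta}{(1-\eta)q^*_\eta} = \frac{\alpha}{\alpha - 1}$, equivalently $q^*_\eta \sim \frac{\alpha-1}{\alpha}\cdot\frac{C^*_\eta}{1-\eta}$ as $\eta \to 1$. -/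
open MeasureTheory Real Filter

open Set in
lemma aux_one_add_rpow (γ : ℝ) (hγ : 1 < γ) :
    MeasureTheory.IntegrableOn (fun s : ℝ => (1 + s) ^ (-γ)) (Set.Ioi (0:ℝ)) ∧
      ∫ s in Set.Ioi (0:ℝ), (1 + s) ^ (-γ) = 1 / (γ - 1) := by
  have h1γ : (1:ℝ) - γ ≠ 0 := by linarith
  have hderiv : ∀ x ∈ Ici (0:ℝ),
      HasDerivAt (fun s : ℝ => (1 + s) ^ (1 - γ) / (1 - γ)) ((1 + x) ^ (-γ)) x := by
    intro x hx
    have hx0 : (0:ℝ) ≤ x := hx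
    have h1x : (0:ℝ) < 1 + x := by linarith
    have h1 : HasDerivAt (fun s : ℝ => 1 + s) 1 x := (hasDerivAt_id x).const_add 1
    have h2 := (Real.hasDerivAt_rpow_const (x := 1 + x) (p := 1 - γ) (Or.inl h1x.ne')).comp x h1
    have h3 := h2.div_const (1 - γ)
    have he : (1:ℝ) - γ - 1 = -γ := by ring
    have : (1 - γ) * (1 + x) ^ (1 - γ - 1) * 1 / (1 - γ) = (1 + x) ^ (-γ) := by
      rw [mul_one, mul_div_assoc, he]
      field_simp
    rwa [this] at h3
  have htends : Tendsto (fun s : ℝ => (1 + s) ^ (1 - γ) / (1 - γ)) atTop (nhds 0) := by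
    have h1 : Tendsto (fun s : ℝ => 1 + s) atTop atTop :=
      tendsto_atTop_add_const_left _ 1 tendsto_id
    have h2 : Tendsto (fun x : ℝ => x ^ (1 - γ)) atTop (nhds 0) := by
      have := tendsto_rpow_neg_atTop (y := γ - 1) (by linarith)
      simpa [neg_sub] using this
    have := (h2.comp h1).div_const (1 - γ)
    simpa using this
  have hcont : ContinuousWithinAt (fun s : ℝ => (1 + s) ^ (1 - γ) / (1 - γ)) (Ici (0:ℝ)) 0 :=
    (hderiv 0 self_mem_Ici).continuousAt.continuousWithinAt
  have hpos : ∀ x ∈ Ioi (0:ℝ), (0:ℝ) ≤ (1 + x) ^ (-γ) := by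
    intro x hx
    have hx0 : (0:ℝ) < x := hx
    exact Real.rpow_nonneg (by linarith) _
  refine ⟨integrableOn_Ioi_deriv_of_nonneg hcont (fun x hx => hderiv x (mem_Ici.mpr (le_of_lt hx))) hpos htends, ?_⟩
  rw [integral_Ioi_of_hasDerivAt_of_nonneg hcont (fun x hx => hderiv x (mem_Ici.mpr (le_of_lt hx))) hpos htends]
  norm_num
  rw [neg_inv, neg_sub]


open Set in
theorem order_quantity_cost_scaling
    (μ : Measure ℝ) (hprob : IsProbabilityMeasure μ) (hsupp : μ (Set.Iio 0) = 0)
    (α : ℝ) (hα : 1 < α)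
    (hrv : ∀ t : ℝ, 0 < t →
      Tendsto (fun x : ℝ => (μ (Set.Ioi (t * x))).toReal / (μ (Set.Ioi x)).toReal)
        atTop (nhds (t ^ (-α))))
    (qs : ℝ → ℝ)
    (hq : ∀ η ∈ Set.Ioo (0 : ℝ) 1, (μ (Set.Ioi (qs η))).toReal = 1 - η) :
    Tendsto
      (fun η : ℝ =>
        ((1 - η) * qs η + ∫ x, max (x - qs η) 0 ∂μ) / ((1 - η) * qs η))
      (nhdsWithin 1 (Set.Iio 1)) (nhds (α / (α - 1))) := by
  haveI := hprob
  set F : ℝ → ℝ := fun x => (μ (Set.Ioi x)).toReal with hFdef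
  have hFanti : Antitone F := fun a b hab =>
    ENNReal.toReal_mono (measure_ne_top μ _) (measure_mono (Set.Ioi_subset_Ioi hab))
  have hFmeas : Measurable F := hFanti.measurable
  have hFnonneg : ∀ x, 0 ≤ F x := fun x => ENNReal.toReal_nonneg
  -- positivity of the survival function
  have hFpos : ∀ x, 0 < F x := by
    by_contra hcon
    push_neg at hcon
    obtain ⟨x₀, hx₀⟩ := hcon
    have hx₀0 : F x₀ = 0 := le_antisymm hx₀ (hFnonneg x₀)
    have hzero : ∀ x ≥ x₀, F x = 0 := fun x hx =>
      le_antisymm (hx₀0 ▸ hFanti hx) (hFnonneg x)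
    have h2 := hrv 2 (by norm_num)
    have h0 : Tendsto (fun x : ℝ => (μ (Set.Ioi (2 * x))).toReal / (μ (Set.Ioi x)).toReal)
        atTop (nhds 0) := by
      apply Tendsto.congr' _ (tendsto_const_nhds (x := (0:ℝ)))
      filter_upwards [eventually_ge_atTop x₀] with x hx
      simp only [show (μ (Set.Ioi x)).toReal = F x from rfl, hzero x hx, div_zero]
    have := tendsto_nhds_unique h2 h0
    exact absurd this (ne_of_gt (Real.rpow_pos_of_pos (by norm_num) _))
  -- q_η → ∞
  have hqtop : Tendsto qs (nhdsWithin 1 (Set.Iio 1)) atTop := by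
    rw [tendsto_atTop]
    intro M
    have hFM := hFpos M
    have hmem : Set.Ioo (max (1 - F M) 0) 1 ∈ nhdsWithin (1:ℝ) (Set.Iio 1) :=
      Ioo_mem_nhdsLT_of_mem ⟨max_lt (by linarith) one_pos, le_refl 1⟩
    filter_upwards [hmem] with η hη
    have hη01 : η ∈ Set.Ioo (0:ℝ) 1 := ⟨lt_of_le_of_lt (le_max_right _ _) hη.1, hη.2⟩
    have hFq : F (qs η) = 1 - η := hq η hη01
    have hlt : F (qs η) < F M := by
      have := lt_of_le_of_lt (le_max_left _ _) hη.1
      rw [hFq]; linarith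
    by_contra h
    push_neg at h
    exact absurd (hFanti h.le) (not_le.mpr hlt)
  -- Potter-type bound
  set β : ℝ := (α + 1) / 2 with hβdef
  have hβ1 : 1 < β := by rw [hβdef]; linarith
  have hβα : β < α := by rw [hβdef]; linarith
  obtain ⟨x₁, hx₁⟩ : ∃ x₁ : ℝ, ∀ x ≥ x₁, F (2 * x) / F x < 2 ^ (-β) := by
    have hlt : (2:ℝ) ^ (-α) < 2 ^ (-β) :=
      (Real.rpow_lt_rpow_left_iff (by norm_num)).mpr (by linarith)
    exact eventually_atTop.mp ((hrv 2 (by norm_num)).eventually_lt_const hlt)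
  set x₀ : ℝ := max x₁ 1 with hx₀def
  have hx₀1 : (1:ℝ) ≤ x₀ := le_max_right _ _
  have hstep : ∀ x ≥ x₀, F (2 * x) ≤ 2 ^ (-β) * F x := by
    intro x hx
    exact ((div_lt_iff₀ (hFpos x)).mp (hx₁ x (le_trans (le_max_left _ _) hx))).le
  have hiter : ∀ k : ℕ, ∀ x ≥ x₀, F ((2:ℝ) ^ (k:ℝ) * x) ≤ (2:ℝ) ^ (-β * k) * F x := by
    intro k
    induction k with
    | zero => intro x hx; simp
    | succ k ih =>
      intro x hx
      have hx0 : (0:ℝ) < x := lt_of_lt_of_le one_pos (le_trans hx₀1 hx)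
      have h2k : (1:ℝ) ≤ (2:ℝ) ^ (k:ℝ) := Real.one_le_rpow (by norm_num) (by positivity)
      have hge : (2:ℝ) ^ (k:ℝ) * x ≥ x₀ := le_trans hx (le_mul_of_one_le_left hx0.le h2k)
      have heq : (2:ℝ) ^ ((k:ℝ) + 1) * x = 2 * ((2:ℝ) ^ (k:ℝ) * x) := by
        rw [Real.rpow_add (by norm_num), Real.rpow_one]; ring
      calc F ((2:ℝ) ^ (((k:ℕ)+1 : ℕ):ℝ) * x) = F (2 * ((2:ℝ) ^ (k:ℝ) * x)) := by
              push_cast; rw [heq]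
        _ ≤ 2 ^ (-β) * F ((2:ℝ) ^ (k:ℝ) * x) := hstep _ hge
        _ ≤ 2 ^ (-β) * ((2:ℝ) ^ (-β * k) * F x) := by
              have := ih x hx
              have h2β : (0:ℝ) ≤ (2:ℝ) ^ (-β) := (Real.rpow_pos_of_pos (by norm_num) _).le
              nlinarith [this, h2β]
        _ = (2:ℝ) ^ (-β * (((k:ℕ)+1:ℕ):ℝ)) * F x := by
              push_cast
              rw [← mul_assoc, ← Real.rpow_add (by norm_num)]
              ring_nf
  have hPotter : ∀ x ≥ x₀, ∀ s ≥ (1:ℝ), F (x * s) ≤ 2 ^ β * s ^ (-β) * F x := by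
    intro x hx s hs
    have hs0 : (0:ℝ) < s := lt_of_lt_of_le one_pos hs
    have hx0 : (0:ℝ) < x := lt_of_lt_of_le one_pos (le_trans hx₀1 hx)
    set k : ℕ := ⌊Real.logb 2 s⌋₊ with hkdef
    have hlognn : 0 ≤ Real.logb 2 s := Real.logb_nonneg (by norm_num) hs
    have hk1 : (2:ℝ) ^ (k:ℝ) ≤ s := by
      have h1 : (k:ℝ) ≤ Real.logb 2 s := Nat.floor_le hlognn
      calc (2:ℝ) ^ (k:ℝ) ≤ (2:ℝ) ^ (Real.logb 2 s) :=
            Real.rpow_le_rpow_of_exponent_le (by norm_num) h1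
        _ = s := Real.rpow_logb (by norm_num) (by norm_num) hs0
    have hk2 : s < (2:ℝ) ^ ((k:ℝ) + 1) := by
      have h1 : Real.logb 2 s < (k:ℝ) + 1 := Nat.lt_floor_add_one _
      calc s = (2:ℝ) ^ (Real.logb 2 s) := (Real.rpow_logb (by norm_num) (by norm_num) hs0).symm
        _ < (2:ℝ) ^ ((k:ℝ) + 1) := Real.rpow_lt_rpow_of_exponent_lt (by norm_num) h1
    have h2k0 : (0:ℝ) < (2:ℝ) ^ (k:ℝ) := Real.rpow_pos_of_pos (by norm_num) _
    have step1 : F (x * s) ≤ F ((2:ℝ) ^ (k:ℝ) * x) := by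
      apply hFanti
      calc (2:ℝ) ^ (k:ℝ) * x = x * (2:ℝ) ^ (k:ℝ) := mul_comm _ _
        _ ≤ x * s := mul_le_mul_of_nonneg_left hk1 hx0.le
    have step2 : F ((2:ℝ) ^ (k:ℝ) * x) ≤ (2:ℝ) ^ (-β * k) * F x := hiter k x hx
    have step3 : (2:ℝ) ^ (-β * (k:ℝ)) ≤ 2 ^ β * s ^ (-β) := by
      have hs2 : s / 2 < (2:ℝ) ^ (k:ℝ) := by
        rw [div_lt_iff₀ (by norm_num : (0:ℝ) < 2)]
        calc s < (2:ℝ) ^ ((k:ℝ) + 1) := hk2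
          _ = (2:ℝ) ^ (k:ℝ) * 2 := by rw [Real.rpow_add (by norm_num), Real.rpow_one]
      have hs20 : (0:ℝ) < s / 2 := by positivity
      have h1 : ((2:ℝ) ^ (k:ℝ)) ^ (-β) ≤ (s / 2) ^ (-β) :=
        Real.rpow_le_rpow_of_nonpos hs20 hs2.le (by linarith)
      have h2 : ((2:ℝ) ^ (k:ℝ)) ^ (-β) = (2:ℝ) ^ (-β * (k:ℝ)) := by
        rw [← Real.rpow_mul (by norm_num : (0:ℝ) ≤ 2)]
        ring_nf
      have h3 : (s / 2) ^ (-β) = 2 ^ β * s ^ (-β) := by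
        rw [Real.div_rpow hs0.le (by norm_num : (0:ℝ) ≤ 2)]
        rw [div_eq_mul_inv, ← Real.rpow_neg (by norm_num : (0:ℝ) ≤ 2), neg_neg]
        ring
      rw [← h2, ← h3]; exact h1
    calc F (x * s) ≤ (2:ℝ) ^ (-β * k) * F x := le_trans step1 step2
      _ ≤ 2 ^ β * s ^ (-β) * F x :=
        mul_le_mul_of_nonneg_right step3 (hFnonneg x)
  -- Karamata limit of the normalized tail integral
  have haux_α := aux_one_add_rpow α hα
  have haux_β := aux_one_add_rpow β hβ1
  set T : ℝ → ℝ := fun q => ∫ s in Set.Ioi (0:ℝ), F (q * (1 + s)) / F q with hTdef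
  have hmeasq : ∀ q : ℝ, Measurable (fun s : ℝ => F (q * (1 + s)) / F q) := fun q =>
    (hFmeas.comp (measurable_const.mul (measurable_const.add measurable_id))).div_const _
  have hTlim : Tendsto T atTop (nhds (1 / (α - 1))) := by
    have key : Tendsto (fun q => ∫ s in Set.Ioi (0:ℝ), F (q * (1 + s)) / F q) atTop
        (nhds (∫ s in Set.Ioi (0:ℝ), (1 + s) ^ (-α))) := by
      apply tendsto_integral_filter_of_dominated_convergence
        (bound := fun s : ℝ => 2 ^ β * (1 + s) ^ (-β))
      · exact Eventually.of_forall fun q => (hmeasq q).aestronglyMeasurable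
      · filter_upwards [eventually_ge_atTop x₀] with q hqx
        refine (ae_restrict_iff' measurableSet_Ioi).mpr (Eventually.of_forall fun s hs => ?_)
        have hs0 : (0:ℝ) < s := hs
        have hP := hPotter q hqx (1 + s) (by linarith)
        have hFq := hFpos q
        rw [Real.norm_eq_abs, abs_of_nonneg (div_nonneg (hFnonneg _) (hFnonneg q))]
        rw [div_le_iff₀ hFq]
        exact hP
      · exact haux_β.1.const_mul _
      · refine (ae_restrict_iff' measurableSet_Ioi).mpr (Eventually.of_forall fun s hs => ?_)
        have hs0 : (0:ℝ) < s := hs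
        have h := hrv (1 + s) (by linarith)
        refine h.congr fun q => ?_
        show (μ (Set.Ioi ((1 + s) * q))).toReal / (μ (Set.Ioi q)).toReal = F (q * (1 + s)) / F q
        rw [mul_comm]
    rwa [haux_α.2] at key
  -- identification of the cost integral
  have hIeq : ∀ q : ℝ, x₀ ≤ q → ∫ x, max (x - q) 0 ∂μ = q * F q * T q := by
    intro q hqx
    have hq0 : (0:ℝ) < q := lt_of_lt_of_le one_pos (le_trans hx₀1 hqx)
    have hFq : (0:ℝ) < F q := hFpos q
    have hint1 : IntegrableOn (fun s : ℝ => F (q * (1 + s))) (Set.Ioi (0:ℝ)) := by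
      apply Integrable.mono' (haux_β.1.const_mul (2 ^ β * F q))
        ((hFmeas.comp (measurable_const.mul (measurable_const.add measurable_id))).aestronglyMeasurable :
          AEStronglyMeasurable (fun s : ℝ => F (q * (1 + s))) (volume.restrict (Set.Ioi 0)))
      refine (ae_restrict_iff' measurableSet_Ioi).mpr (Eventually.of_forall fun s hs => ?_)
      have hs0 : (0:ℝ) < s := hs
      have hP := hPotter q hqx (1 + s) (by linarith)
      show |F (q * (1 + s))| ≤ 2 ^ β * F q * (1 + s) ^ (-β)
      rw [abs_of_nonneg (hFnonneg _)]
      calc F (q * (1 + s)) ≤ 2 ^ β * (1 + s) ^ (-β) * F q := hP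
        _ = 2 ^ β * F q * (1 + s) ^ (-β) := by ring
    have hint1' : IntegrableOn (fun s : ℝ => F (q + q * s)) (Set.Ioi (0:ℝ)) := by
      simpa only [mul_add, mul_one] using hint1
    have hint2 : IntegrableOn (fun t : ℝ => F (q + t)) (Set.Ioi (0:ℝ)) := by
      have h := (integrableOn_Ioi_comp_mul_left_iff (fun t : ℝ => F (q + t)) 0 hq0).mp hint1'
      rwa [mul_zero] at h
    have hnn : 0 ≤ᵐ[μ] fun x : ℝ => max (x - q) 0 := Eventually.of_forall fun x => le_max_right _ _
    have hmble : AEStronglyMeasurable (fun x : ℝ => max (x - q) 0) μ :=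
      ((continuous_id.sub continuous_const).max continuous_const).aestronglyMeasurable
    rw [MeasureTheory.integral_eq_lintegral_of_nonneg_ae hnn hmble]
    rw [lintegral_eq_lintegral_meas_lt μ hnn hmble.aemeasurable]
    have hsets : ∀ t ∈ Set.Ioi (0:ℝ),
        μ {a : ℝ | t < max (a - q) 0} = ENNReal.ofReal (F (q + t)) := by
      intro t ht
      have ht0 : (0:ℝ) < t := ht
      have hset : {a : ℝ | t < max (a - q) 0} = Set.Ioi (q + t) := by
        ext a
        simp only [Set.mem_setOf_eq, Set.mem_Ioi, lt_max_iff]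
        constructor
        · rintro (h | h)
          · linarith
          · linarith
        · intro h; left; linarith
      rw [hset]
      exact (ENNReal.ofReal_toReal (measure_ne_top μ _)).symm
    rw [setLIntegral_congr_fun measurableSet_Ioi hsets]
    rw [← ofReal_integral_eq_lintegral_ofReal hint2
      ((ae_restrict_iff' measurableSet_Ioi).mpr (Eventually.of_forall fun t _ => hFnonneg _))]
    rw [ENNReal.toReal_ofReal (integral_nonneg fun t => hFnonneg _)]
    have hchg := integral_comp_mul_left_Ioi (fun t : ℝ => F (q + t)) 0 hq0
    rw [mul_zero, smul_eq_mul] at hchg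
    have heq1 : ∫ t in Set.Ioi (0:ℝ), F (q + t) = q * ∫ s in Set.Ioi (0:ℝ), F (q + q * s) := by
      rw [hchg]
      field_simp
    rw [heq1]
    have h2 : T q = (∫ s in Set.Ioi (0:ℝ), F (q + q * s)) / F q := by
      rw [hTdef]
      rw [← integral_div]
      apply setIntegral_congr_fun measurableSet_Ioi
      intro s _
      have h3 : q * (1 + s) = q + q * s := by ring
      show F (q * (1 + s)) / F q = F (q + q * s) / F q
      rw [h3]
    rw [h2]
    field_simp
  -- conclusion
  have hev : ∀ᶠ η in nhdsWithin (1:ℝ) (Set.Iio 1),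
      ((1 - η) * qs η + ∫ x, max (x - qs η) 0 ∂μ) / ((1 - η) * qs η) = 1 + T (qs η) := by
    have hmem : Set.Ioo (0:ℝ) 1 ∈ nhdsWithin (1:ℝ) (Set.Iio 1) :=
      Ioo_mem_nhdsLT_of_mem ⟨one_pos, le_refl 1⟩
    filter_upwards [hqtop.eventually (eventually_ge_atTop x₀), hmem] with η h1 h2
    have hFq : F (qs η) = 1 - η := hq η h2
    have hq0 : (0:ℝ) < qs η := lt_of_lt_of_le one_pos (le_trans hx₀1 h1)
    rw [hIeq (qs η) h1, ← hFq]
    have hFqpos := hFpos (qs η)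
    field_simp
  have hαne : α - 1 ≠ 0 := by linarith
  rw [show α / (α - 1) = 1 + 1 / (α - 1) by field_simp; ring]
  exact Tendsto.congr' (Filter.EventuallyEq.symm hev) (tendsto_const_nhds.add (hTlim.comp hqtop))
end
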